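/- arXiv:2308.07696 — 2 statements merged into one kernel-verified Lean document; each statement's English description precedes it below -/
import Mathlib

section
/- Fix c > 0. There exists N₀ such that for every integer N ≥ N₀ and all distinct vertices u, v ∈ V_N, Σ_{x ∈ V_N, x ≠ u, x ≠ v} p(u,x)·p(x,v) ≤ 5c²·(log N)/N². -/
open scoped BigOperators

/-- Vertices of the discrete 2-dimensional torus. -/
abbrev Vtx (N : ℕ) : Type := ZMod N × ZMod N

/-- `ρ_N(i)`: for a residue represented in `{0,…,N−1}`, `ρ_N(i) = i` if `i ≤ N/2`
and `ρ_N(i) = N − i` otherwise. -/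
def rhoN (N : ℕ) (i : ZMod N) : ℕ :=
  if 2 * i.val ≤ N then i.val else N - i.val

/-- Torus distance `ρ(u,v) = ρ_N(u₁ − v₁) + ρ_N(u₂ − v₂)`. -/
def torusDist (N : ℕ) (u v : Vtx N) : ℕ :=
  rhoN N (u.1 - v.1) + rhoN N (u.2 - v.2)

/-- Connection probability `p(u,v) = min(c/(N·ρ(u,v)), 1)` for `u ≠ v`, `p(u,u) = 0`. -/
noncomputable def edgeProb (N : ℕ) (c : ℝ) (u v : Vtx N) : ℝ :=
  if u = v then 0 else min (c / ((N : ℝ) * (torusDist N u v : ℝ))) 1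

lemma real_inv_sq_le (x : ℝ) (hx : 0 < x) : 1/(x+1)^2 ≤ 1/x - 1/(x+1) := by
  have h1 : 0 < x + 1 := by linarith
  have h2 : 1/x - 1/(x+1) = 1/(x*(x+1)) := by field_simp; ring
  rw [h2]
  apply one_div_le_one_div_of_le (by positivity)
  nlinarith

-- shifted inverse square sum
lemma sum_inv_sq_shift (k M : ℕ) (hk : 1 ≤ k) :
    ∑ j ∈ Finset.Icc 1 M, (1:ℝ)/((k + j : ℕ):ℝ)^2 ≤ 1/(k:ℝ) := by
  have key : ∀ M : ℕ, ∑ j ∈ Finset.Icc 1 M, (1:ℝ)/((k + j : ℕ):ℝ)^2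
      ≤ 1/(k:ℝ) - 1/((k+M:ℕ):ℝ) := by
    intro M
    induction M with
    | zero => simp
    | succ M ih =>
      rw [Finset.sum_Icc_succ_top (by omega)]
      have hkM : (0:ℝ) < (k+M:ℕ) := by positivity
      have := real_inv_sq_le ((k+M:ℕ):ℝ) hkM
      have hcast : ((k + (M+1) : ℕ):ℝ) = ((k+M:ℕ):ℝ) + 1 := by push_cast; ring
      rw [hcast]
      linarith
  have := key M
  have h2 : (0:ℝ) ≤ 1/((k+M:ℕ):ℝ) := by positivity
  linarith

lemma sum_inv_sq (M : ℕ) : ∑ j ∈ Finset.Icc 1 M, (1:ℝ)/(j:ℝ)^2 ≤ 2 := by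
  rcases Nat.eq_zero_or_pos M with h | h
  · subst h; simp
  · have key : ∀ M : ℕ, 1 ≤ M → ∑ j ∈ Finset.Icc 1 M, (1:ℝ)/(j:ℝ)^2 ≤ 2 - 1/(M:ℝ) := by
      intro M hM
      induction M, hM using Nat.le_induction with
      | base => norm_num
      | succ M hM ih =>
        rw [Finset.sum_Icc_succ_top (by omega)]
        have hM' : (0:ℝ) < (M:ℝ) := by exact_mod_cast hM
        have := real_inv_sq_le (M:ℝ) hM'
        push_cast
        push_cast at ih
        linarith
    have := key M h
    have h2 : (0:ℝ) ≤ 1/(M:ℝ) := by positivity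
    linarith

lemma sum_harmonic (M : ℕ) : ∑ j ∈ Finset.Icc 1 M, (1:ℝ)/(j:ℝ) ≤ 1 + Real.log M := by
  induction M with
  | zero => simp
  | succ M ih =>
    rcases Nat.eq_zero_or_pos M with h | h
    · subst h; norm_num
    · rw [Finset.sum_Icc_succ_top (by omega)]
      have hM : (0:ℝ) < (M:ℝ) := by exact_mod_cast h
      have hM1 : (0:ℝ) < (M:ℝ) + 1 := by linarith
      have hlog : Real.log ((M:ℝ)/((M:ℝ)+1)) ≤ (M:ℝ)/((M:ℝ)+1) - 1 :=
        Real.log_le_sub_one_of_pos (by positivity)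
      rw [Real.log_div hM.ne' hM1.ne'] at hlog
      have hfrac : (M:ℝ)/((M:ℝ)+1) - 1 = -(1/((M:ℝ)+1)) := by field_simp; ring
      rw [hfrac] at hlog
      push_cast
      linarith


lemma sum_rhoN_le (N : ℕ) [NeZero N] (h : ℕ → ℝ) (hh : ∀ i, 0 ≤ h i) :
    ∑ a : ZMod N, h (rhoN N a) ≤ h 0 + 2 * ∑ i ∈ Finset.Icc 1 (N/2), h i := by
  classical
  have hN : 1 ≤ N := Nat.one_le_iff_ne_zero.mpr (NeZero.ne N)
  set M := N / 2 with hM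
  have step1 : ∑ a : ZMod N, h (rhoN N a)
      = ∑ v ∈ Finset.range N, h (if 2 * v ≤ N then v else N - v) := by
    apply Finset.sum_nbij' (i := fun a => ZMod.val a) (j := fun v => (v : ZMod N))
    · intro a _; exact Finset.mem_range.mpr (ZMod.val_lt a)
    · intro v _; exact Finset.mem_univ _
    · intro a _; simp [ZMod.natCast_val, ZMod.cast_id]
    · intro v hv; exact ZMod.val_cast_of_lt (Finset.mem_range.mp hv)
    · intro a _; unfold rhoN; rfl
  rw [step1]
  have hMN : M + 1 ≤ N := by omega
  rw [Finset.range_eq_Ico, ← Finset.sum_Ico_consecutive _ (Nat.zero_le (M+1)) hMN]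
  have first : ∑ v ∈ Finset.Ico 0 (M+1), h (if 2 * v ≤ N then v else N - v)
      = h 0 + ∑ i ∈ Finset.Icc 1 M, h i := by
    rw [Finset.sum_congr rfl (fun v hv => by
      simp only [Finset.mem_Ico] at hv
      rw [if_pos (by omega)])]
    have hins : Finset.Ico 0 (M+1) = insert 0 (Finset.Icc 1 M) := by
      ext x; simp [Finset.mem_Ico, Finset.mem_Icc]; omega
    rw [hins, Finset.sum_insert (by simp)]
  have second : ∑ v ∈ Finset.Ico (M+1) N, h (if 2 * v ≤ N then v else N - v)
      ≤ ∑ i ∈ Finset.Icc 1 M, h i := by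
    rw [Finset.sum_congr rfl (fun v hv => by
      simp only [Finset.mem_Ico] at hv
      rw [if_neg (by omega)])]
    have himg : ∑ v ∈ Finset.Ico (M+1) N, h (N - v)
        = ∑ i ∈ (Finset.Ico (M+1) N).image (fun v => N - v), h i := by
      rw [Finset.sum_image]
      intro x hx y hy hxy
      simp only [Finset.mem_coe, Finset.mem_Ico] at hx hy hxy
      omega
    rw [himg]
    apply Finset.sum_le_sum_of_subset_of_nonneg
    · intro i hi
      simp only [Finset.mem_image, Finset.mem_Ico] at hi
      obtain ⟨v, hv, rfl⟩ := hi
      simp only [Finset.mem_Icc]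
      omega
    · intro i _ _; exact hh i
  linarith

lemma core_sum (N : ℕ) [NeZero N] :
    ∑ w : Vtx N, (1:ℝ)/((rhoN N w.1 + rhoN N w.2 : ℕ):ℝ)^2 ≤ 12 + 4 * Real.log N := by
  classical
  have hN : 1 ≤ N := Nat.one_le_iff_ne_zero.mpr (NeZero.ne N)
  set M := N / 2 with hM
  set F : ℕ → ℝ := fun k => (1:ℝ)/(k:ℝ)^2 with hF
  have hFnn : ∀ k, 0 ≤ F k := fun k => by positivity
  have hF0 : F 0 = 0 := by simp [hF]
  -- bounds on 1-dim sums
  have hsq : ∑ j ∈ Finset.Icc 1 M, F j ≤ 2 := sum_inv_sq M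
  have hharm : ∑ i ∈ Finset.Icc 1 M, (1:ℝ)/(i:ℝ) ≤ 1 + Real.log N := by
    refine (sum_harmonic M).trans ?_
    have : Real.log M ≤ Real.log N := by
      rcases Nat.eq_zero_or_pos M with h | h
      · rw [h]; simpa using Real.log_nonneg (by exact_mod_cast hN)
      · exact Real.log_le_log (by exact_mod_cast h) (by exact_mod_cast Nat.div_le_self N 2)
    linarith
  -- inner bound for each i
  have inner : ∀ i : ℕ, ∑ b : ZMod N, F (i + rhoN N b)
      ≤ F i + 2 * ∑ j ∈ Finset.Icc 1 M, F (i + j) := by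
    intro i
    simpa using sum_rhoN_le N (fun j => F (i + j)) (fun j => hFnn _)
  have houter := sum_rhoN_le N (fun i => ∑ b : ZMod N, F (i + rhoN N b))
    (fun i => Finset.sum_nonneg fun b _ => hFnn _)
  have hsplit : ∑ w : Vtx N, (1:ℝ)/((rhoN N w.1 + rhoN N w.2 : ℕ):ℝ)^2
      = ∑ a : ZMod N, ∑ b : ZMod N, F (rhoN N a + rhoN N b) := by
    rw [Fintype.sum_prod_type]
  rw [hsplit]
  have h0 : ∑ b : ZMod N, F (0 + rhoN N b) ≤ 0 + 2 * 2 := by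
    have := inner 0
    have h2 : ∑ j ∈ Finset.Icc 1 M, F (0 + j) ≤ 2 := by
      simpa using hsq
    rw [hF0] at this
    -- F 0 appears as F (0) in `this` after i = 0; adjust
    simp only [Nat.zero_add] at this h2 ⊢
    calc ∑ b : ZMod N, F (rhoN N b) ≤ F 0 + 2 * ∑ j ∈ Finset.Icc 1 M, F j := by
          simpa using inner 0
      _ ≤ 0 + 2 * 2 := by rw [hF0]; linarith
  have hmid : ∀ i ∈ Finset.Icc 1 M, ∑ b : ZMod N, F (i + rhoN N b)
      ≤ F i + 2 * (1/(i:ℝ)) := by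
    intro i hi
    simp only [Finset.mem_Icc] at hi
    refine (inner i).trans ?_
    have := sum_inv_sq_shift i M hi.1
    have hcongr : ∑ j ∈ Finset.Icc 1 M, F (i + j)
        = ∑ j ∈ Finset.Icc 1 M, (1:ℝ)/((i + j : ℕ):ℝ)^2 := rfl
    rw [hcongr]
    linarith
  have hsum_mid : ∑ i ∈ Finset.Icc 1 M, (∑ b : ZMod N, F (i + rhoN N b))
      ≤ ∑ i ∈ Finset.Icc 1 M, (F i + 2 * (1/(i:ℝ))) := Finset.sum_le_sum hmid
  rw [Finset.sum_add_distrib] at hsum_mid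
  have hsum_mid2 : ∑ i ∈ Finset.Icc 1 M, (∑ b : ZMod N, F (i + rhoN N b))
      ≤ 2 + 2 * (1 + Real.log N) := by
    have h2 : ∑ i ∈ Finset.Icc 1 M, 2 * (1/(i:ℝ)) = 2 * ∑ i ∈ Finset.Icc 1 M, (1/(i:ℝ)) :=
      (Finset.mul_sum _ _ _).symm
    rw [h2] at hsum_mid
    linarith
  calc ∑ a : ZMod N, ∑ b : ZMod N, F (rhoN N a + rhoN N b)
      ≤ (∑ b : ZMod N, F (0 + rhoN N b))
        + 2 * ∑ i ∈ Finset.Icc 1 M, (∑ b : ZMod N, F (i + rhoN N b)) := houter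
    _ ≤ (0 + 2 * 2) + 2 * (2 + 2 * (1 + Real.log N)) := by
        have hlog : 0 ≤ Real.log N := Real.log_nonneg (by exact_mod_cast hN)
        have : (0:ℝ) ≤ ∑ i ∈ Finset.Icc 1 M, (∑ b : ZMod N, F (i + rhoN N b)) :=
          Finset.sum_nonneg fun i _ => Finset.sum_nonneg fun b _ => hFnn _
        nlinarith [h0, hsum_mid2]
    _ ≤ 12 + 4 * Real.log N := by ring_nf; linarith

lemma rhoN_pos (N : ℕ) [NeZero N] (a : ZMod N) (ha : a ≠ 0) : 1 ≤ rhoN N a := by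
  have hv : a.val ≠ 0 := fun h => ha (by rwa [ZMod.val_eq_zero] at h)
  have hlt : a.val < N := ZMod.val_lt a
  unfold rhoN; split <;> omega

lemma torusDist_pos (N : ℕ) [NeZero N] {u v : Vtx N} (huv : u ≠ v) :
    1 ≤ torusDist N u v := by
  unfold torusDist
  by_cases h1 : u.1 = v.1
  · have h2 : u.2 ≠ v.2 := fun h => huv (Prod.ext h1 h)
    have := rhoN_pos N (u.2 - v.2) (sub_ne_zero.mpr h2)
    omega
  · have := rhoN_pos N (u.1 - v.1) (sub_ne_zero.mpr h1)
    omega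

lemma edgeProb_nonneg (N : ℕ) (c : ℝ) (hc : 0 ≤ c) (u v : Vtx N) :
    0 ≤ edgeProb N c u v := by
  unfold edgeProb; split
  · exact le_refl 0
  · exact le_min (by positivity) one_pos.le

lemma edgeProb_le (N : ℕ) (c : ℝ) {u v : Vtx N} (huv : u ≠ v) :
    edgeProb N c u v ≤ c / ((N : ℝ) * (torusDist N u v : ℝ)) := by
  unfold edgeProb; rw [if_neg huv]; exact min_le_left _ _

lemma sum_td_left (N : ℕ) [NeZero N] (u : Vtx N) :
    ∑ x : Vtx N, (1:ℝ)/((torusDist N u x : ℕ):ℝ)^2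
      = ∑ w : Vtx N, (1:ℝ)/((rhoN N w.1 + rhoN N w.2 : ℕ):ℝ)^2 := by
  refine (Fintype.sum_equiv (Equiv.subLeft u)
    (fun w => (1:ℝ)/((rhoN N w.1 + rhoN N w.2 : ℕ):ℝ)^2)
    (fun x => (1:ℝ)/((torusDist N u x : ℕ):ℝ)^2) ?_).symm
  intro w
  have : torusDist N u (u - w) = rhoN N w.1 + rhoN N w.2 := by
    unfold torusDist
    simp [Prod.fst_sub, Prod.snd_sub, sub_sub_cancel]
  simp only [Equiv.subLeft_apply, this]

lemma sum_td_right (N : ℕ) [NeZero N] (v : Vtx N) :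
    ∑ x : Vtx N, (1:ℝ)/((torusDist N x v : ℕ):ℝ)^2
      = ∑ w : Vtx N, (1:ℝ)/((rhoN N w.1 + rhoN N w.2 : ℕ):ℝ)^2 := by
  refine (Fintype.sum_equiv (Equiv.addRight v)
    (fun w => (1:ℝ)/((rhoN N w.1 + rhoN N w.2 : ℕ):ℝ)^2)
    (fun x => (1:ℝ)/((torusDist N x v : ℕ):ℝ)^2) ?_).symm
  intro w
  have : torusDist N (w + v) v = rhoN N w.1 + rhoN N w.2 := by
    unfold torusDist
    simp [Prod.fst_add, Prod.snd_add, add_sub_cancel_right]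
  simp only [Equiv.coe_addRight, this]


/-- For `c > 0` there is `N₀` such that for all `N ≥ N₀` and all distinct `u, v`,
`Σ_{x ≠ u, x ≠ v} p(u,x)·p(x,v) ≤ 5c²·(log N)/N²`. -/
theorem stmt13 (c : ℝ) (hc : 0 < c) :
    ∃ N₀ : ℕ, ∀ (N : ℕ) [NeZero N], N₀ ≤ N →
      ∀ u v : Vtx N, u ≠ v →
        ∑ x ∈ Finset.univ.filter (fun x : Vtx N => x ≠ u ∧ x ≠ v),
            edgeProb N c u x * edgeProb N c x v ≤
          5 * c ^ 2 * Real.log N / (N : ℝ) ^ 2 := by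
  use 262144
  intro N _ hN0 u v huv
  have hN1 : 1 ≤ N := le_trans (by norm_num) hN0
  have hNr : (0:ℝ) < (N:ℝ) := by exact_mod_cast hN1
  have hlog12 : (12:ℝ) ≤ Real.log N := by
    have h1 : ((262144:ℕ):ℝ) ≤ (N:ℝ) := by exact_mod_cast hN0
    have h2 : Real.log 262144 ≤ Real.log N := by
      refine Real.log_le_log (by norm_num) ?_
      exact_mod_cast h1
    have h3 : (262144:ℝ) = 2 ^ (18:ℕ) := by norm_num
    have h4 : Real.log 262144 = 18 * Real.log 2 := by
      rw [h3, Real.log_pow]; norm_num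
    have h5 := Real.log_two_gt_d9
    nlinarith
  set K : ℝ := c^2 / (N:ℝ)^2 with hK
  have hKpos : 0 < K := by positivity
  set g1 : Vtx N → ℝ := fun x => K * ((1:ℝ)/((torusDist N u x : ℕ):ℝ)^2) with hg1
  set g2 : Vtx N → ℝ := fun x => K * ((1:ℝ)/((torusDist N x v : ℕ):ℝ)^2) with hg2
  have hg1nn : ∀ x, 0 ≤ g1 x := fun x => by positivity
  have hg2nn : ∀ x, 0 ≤ g2 x := fun x => by positivity
  have term : ∀ x ∈ Finset.univ.filter (fun x : Vtx N => x ≠ u ∧ x ≠ v),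
      edgeProb N c u x * edgeProb N c x v ≤ (g1 x + g2 x) / 2 := by
    intro x hx
    simp only [Finset.mem_filter, Finset.mem_univ, true_and] at hx
    obtain ⟨hxu, hxv⟩ := hx
    have d1 : 1 ≤ torusDist N u x := torusDist_pos N (Ne.symm hxu)
    have d2 : 1 ≤ torusDist N x v := torusDist_pos N hxv
    have d1r : (1:ℝ) ≤ (torusDist N u x : ℝ) := by exact_mod_cast d1
    have d2r : (1:ℝ) ≤ (torusDist N x v : ℝ) := by exact_mod_cast d2
    set a : ℝ := c / ((N:ℝ) * (torusDist N u x : ℝ)) with ha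
    set b : ℝ := c / ((N:ℝ) * (torusDist N x v : ℝ)) with hb
    have hanng : 0 ≤ a := by positivity
    have hbnng : 0 ≤ b := by positivity
    have p1le : edgeProb N c u x ≤ a := edgeProb_le N c (Ne.symm hxu)
    have p2le : edgeProb N c x v ≤ b := edgeProb_le N c hxv
    have p1nn : 0 ≤ edgeProb N c u x := edgeProb_nonneg N c hc.le u x
    have p2nn : 0 ≤ edgeProb N c x v := edgeProb_nonneg N c hc.le x v
    have hab : edgeProb N c u x * edgeProb N c x v ≤ a * b :=
      mul_le_mul p1le p2le p2nn hanng
    have hamgm : 2 * a * b ≤ a^2 + b^2 := two_mul_le_add_sq a b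
    have ha2 : a^2 = g1 x := by
      rw [hg1, ha, div_pow, mul_pow, hK]
      field_simp
    have hb2 : b^2 = g2 x := by
      rw [hg2, hb, div_pow, mul_pow, hK]
      field_simp
    rw [← ha2, ← hb2]
    linarith
  have step1 : ∑ x ∈ Finset.univ.filter (fun x : Vtx N => x ≠ u ∧ x ≠ v),
      edgeProb N c u x * edgeProb N c x v
      ≤ ∑ x : Vtx N, (g1 x + g2 x) / 2 := by
    refine (Finset.sum_le_sum term).trans ?_
    apply Finset.sum_le_sum_of_subset_of_nonneg (Finset.filter_subset _ _)
    intro x _ _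
    have := hg1nn x; have := hg2nn x
    linarith
  have hS := core_sum N
  have hsum1 : ∑ x : Vtx N, g1 x ≤ K * (12 + 4 * Real.log N) := by
    rw [hg1, ← Finset.mul_sum, sum_td_left N u]
    exact mul_le_mul_of_nonneg_left hS hKpos.le
  have hsum2 : ∑ x : Vtx N, g2 x ≤ K * (12 + 4 * Real.log N) := by
    rw [hg2, ← Finset.mul_sum, sum_td_right N v]
    exact mul_le_mul_of_nonneg_left hS hKpos.le
  have step2 : ∑ x : Vtx N, (g1 x + g2 x) / 2 ≤ K * (12 + 4 * Real.log N) := by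
    have : ∑ x : Vtx N, (g1 x + g2 x) / 2
        = (∑ x : Vtx N, g1 x + ∑ x : Vtx N, g2 x) / 2 := by
      rw [← Finset.sum_add_distrib, Finset.sum_div]
    rw [this]
    linarith
  have final : K * (12 + 4 * Real.log N) ≤ 5 * c ^ 2 * Real.log N / (N : ℝ) ^ 2 := by
    have h1 : K * (12 + 4 * Real.log N) ≤ K * (5 * Real.log N) :=
      mul_le_mul_of_nonneg_left (by linarith) hKpos.le
    have h2 : K * (5 * Real.log N) = 5 * c ^ 2 * Real.log N / (N : ℝ) ^ 2 := by
      rw [hK]; ring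
    linarith
  linarith
end

section
/- Let c = c^cr = 1/(4 log 2) and fix K > 0. There exist a constant C' > 0 and N₀ such that for every integer N ≥ N₀, every subset A ⊆ V_N with |A| ≤ K·N^{4/3}, and every vertex v ∈ V_N ∖ A, the normalization Z_{N,A}(v) = Σ_{u ∈ V_N∖A, u ≠ v} p(u,v) satisfies |Z_{N,A}(v) − 1| ≤ C'·N^{−1/3}. -/
open scoped BigOperators

/-- The critical value `c^cr = 1/(4 log 2)`. -/
noncomputable def ccr : ℝ := 1 / (4 * Real.log 2)

/-- `Z_{N,A}(v) = Σ_{u ∈ V_N∖A, u ≠ v} p(u,v)`. -/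
noncomputable def ZNA (N : ℕ) [NeZero N] (c : ℝ) (A : Finset (Vtx N)) (v : Vtx N) : ℝ :=
  ∑ u ∈ (Finset.univ \ A).erase v, edgeProb N c u v

open Finset

set_option linter.unusedSectionVars false
set_option linter.unusedTactic false
set_option linter.unusedVariables false



section Basics
variable (N : ℕ) [NeZero N]

lemma rhoN_le_half (a : ZMod N) : rhoN N a ≤ N / 2 := by
  have hv := ZMod.val_lt a
  unfold rhoN
  split_ifs with h <;> omega

lemma rhoN_zero : rhoN N 0 = 0 := by
  simp [rhoN]

lemma rhoN_eq_zero_iff (a : ZMod N) : rhoN N a = 0 ↔ a = 0 := by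
  have hv := ZMod.val_lt a
  constructor
  · intro h
    have hval : a.val = 0 := by
      unfold rhoN at h; split_ifs at h <;> omega
    exact (ZMod.val_eq_zero a).mp hval
  · rintro rfl; exact rhoN_zero N

lemma eq_of_rhoN {a : ZMod N} {j : ℕ} (h : rhoN N a = j) :
    a = (j : ZMod N) ∨ a = -(j : ZMod N) := by
  have hv := ZMod.val_lt a
  have hcast : ((a.val : ℕ) : ZMod N) = a := ZMod.natCast_rightInverse a
  unfold rhoN at h
  split_ifs at h with hc
  · left; rw [← h]; exact hcast.symm
  · right
    have hjN : j ≤ N := by omega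
    have hval : a.val = N - j := by omega
    have h2 : ((N - j : ℕ) : ZMod N) = a := by rw [← hval]; exact hcast
    rw [← h2, Nat.cast_sub hjN, ZMod.natCast_self, zero_sub]

noncomputable def fib (N : ℕ) [NeZero N] (j : ℕ) : ℕ :=
  (Finset.univ.filter (fun a : ZMod N => rhoN N a = j)).card

lemma fib_le_two (j : ℕ) : fib N j ≤ 2 := by
  have hsub : (Finset.univ.filter (fun a : ZMod N => rhoN N a = j))
      ⊆ {(j : ZMod N), -(j : ZMod N)} := by
    intro a ha
    simp only [mem_filter] at ha
    rcases eq_of_rhoN N ha.2 with h | h <;> simp [h]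
  calc fib N j ≤ ({(j : ZMod N), -(j : ZMod N)} : Finset (ZMod N)).card := card_le_card hsub
    _ ≤ 2 := (card_insert_le _ _).trans (by simp)

lemma fib_eq_two {j : ℕ} (h1 : 1 ≤ j) (h2 : 2 * j < N) : fib N j = 2 := by
  have hjN : j < N := by omega
  have hvj : ((j : ZMod N)).val = j := ZMod.val_cast_of_lt hjN
  have hjne : (j : ZMod N) ≠ 0 := by
    intro h
    have : ((j : ZMod N)).val = 0 := by rw [h, ZMod.val_zero]
    omega
  have hvneg : (-(j : ZMod N)).val = N - j := by
    rw [ZMod.neg_val, if_neg hjne, hvj]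
  have hrj : rhoN N ((j : ZMod N)) = j := by
    unfold rhoN; rw [hvj, if_pos (by omega)]
  have hrneg : rhoN N (-(j : ZMod N)) = j := by
    unfold rhoN; rw [hvneg, if_neg (by omega)]; omega
  have hne : (j : ZMod N) ≠ -(j : ZMod N) := by
    intro h
    have h' := congrArg ZMod.val h
    rw [hvj, hvneg] at h'; omega
  have hset : (Finset.univ.filter (fun a : ZMod N => rhoN N a = j))
      = {(j : ZMod N), -(j : ZMod N)} := by
    ext a
    simp only [mem_filter, mem_univ, true_and, mem_insert, mem_singleton]
    constructor
    · exact fun h => eq_of_rhoN N h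
    · rintro (rfl | rfl); exacts [hrj, hrneg]
  rw [fib, hset, card_pair hne]

lemma sum_rhoN_fiber (h : ℕ → ℝ) :
    ∑ a : ZMod N, h (rhoN N a) = ∑ j ∈ range (N / 2 + 1), (fib N j : ℝ) * h j := by
  classical
  rw [Finset.sum_comp h (fun a : ZMod N => rhoN N a)]
  have hsub : (Finset.univ.image (fun a : ZMod N => rhoN N a)) ⊆ range (N / 2 + 1) := by
    intro j hj
    obtain ⟨a, -, rfl⟩ := mem_image.mp hj
    exact mem_range.mpr (Nat.lt_succ_of_le (rhoN_le_half N a))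
  rw [Finset.sum_subset hsub ?_]
  · refine Finset.sum_congr rfl fun j _ => ?_
    rw [nsmul_eq_mul]
    congr 1
  · intro j _ hj
    have : (Finset.univ.filter (fun a : ZMod N => rhoN N a = j)) = ∅ := by
      rw [Finset.filter_eq_empty_iff]
      intro a _ h'
      exact hj (mem_image.mpr ⟨a, mem_univ a, h'⟩)
    simp [this]

lemma sum_vtx_fiber (G : ℕ → ℕ → ℝ) :
    ∑ w : Vtx N, G (rhoN N w.1) (rhoN N w.2)
      = ∑ j ∈ range (N / 2 + 1), ∑ k ∈ range (N / 2 + 1),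
          (fib N j : ℝ) * (fib N k : ℝ) * G j k := by
  rw [Fintype.sum_prod_type]
  have h1 : ∀ a : ZMod N, ∑ b : ZMod N, G (rhoN N a) (rhoN N b)
      = ∑ k ∈ range (N / 2 + 1), (fib N k : ℝ) * G (rhoN N a) k :=
    fun a => sum_rhoN_fiber N (fun k => G (rhoN N a) k)
  simp_rw [h1]
  rw [Finset.sum_comm]
  have h2 : ∀ k, ∑ a : ZMod N, (fib N k : ℝ) * G (rhoN N a) k
      = (fib N k : ℝ) * ∑ j ∈ range (N / 2 + 1), (fib N j : ℝ) * G j k := by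
    intro k
    rw [← Finset.mul_sum, sum_rhoN_fiber N (fun j => G j k)]
  simp_rw [h2]
  calc ∑ k ∈ range (N / 2 + 1), (fib N k : ℝ) * ∑ j ∈ range (N / 2 + 1), (fib N j : ℝ) * G j k
      = ∑ k ∈ range (N / 2 + 1), ∑ j ∈ range (N / 2 + 1),
          (fib N j : ℝ) * (fib N k : ℝ) * G j k := by
        refine Finset.sum_congr rfl fun k _ => ?_
        rw [Finset.mul_sum]
        exact Finset.sum_congr rfl fun j _ => by ring
    _ = _ := Finset.sum_comm

lemma sum_dist_translate (v : Vtx N) (F : ℕ → ℝ) :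
    ∑ u : Vtx N, F (torusDist N u v) = ∑ w : Vtx N, F (rhoN N w.1 + rhoN N w.2) := by
  apply Fintype.sum_equiv (Equiv.subRight v)
  intro u
  simp [torusDist, Equiv.subRight, Prod.fst_sub, Prod.snd_sub]

end Basics
-- per-term log bounds
lemma log_succ_sub_le {x : ℝ} (hx : 0 < x) : Real.log (x + 1) - Real.log x ≤ 1 / x := by
  rw [← Real.log_div (by positivity) (ne_of_gt hx)]
  have h := Real.log_le_sub_one_of_pos (show 0 < (x + 1) / x by positivity)
  have he : (x + 1) / x - 1 = 1 / x := by field_simp; ring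
  linarith [he ▸ h]

lemma le_log_succ_sub {x : ℝ} (hx : 0 < x) : 1 / (x + 1) ≤ Real.log (x + 1) - Real.log x := by
  have h := Real.log_le_sub_one_of_pos (show 0 < x / (x + 1) by positivity)
  rw [Real.log_div (ne_of_gt hx) (by positivity)] at h
  have he : x / (x + 1) - 1 = -(1 / (x + 1)) := by field_simp; ring
  linarith [he ▸ h]

lemma sum_inv_le_log (a n : ℕ) (ha : 1 ≤ a) :
    ∑ k ∈ range n, ((a + k + 1 : ℕ) : ℝ)⁻¹
      ≤ Real.log ((a : ℝ) + n) - Real.log a := by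
  have htel := Finset.sum_range_sub (fun k => Real.log ((a : ℝ) + k)) n
  simp only [Nat.cast_zero, add_zero] at htel
  rw [← htel]
  apply Finset.sum_le_sum
  intro k _
  have e1 : ((a + k + 1 : ℕ) : ℝ) = ((a : ℝ) + k) + 1 := by push_cast; ring
  have e2 : (a : ℝ) + ((k + 1 : ℕ) : ℝ) = ((a : ℝ) + k) + 1 := by push_cast; ring
  rw [e1, e2, ← one_div]
  exact le_log_succ_sub (by positivity)

lemma log_le_sum_inv (a n : ℕ) :
    Real.log ((a : ℝ) + n + 1) - Real.log ((a : ℝ) + 1)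
      ≤ ∑ k ∈ range n, ((a + k + 1 : ℕ) : ℝ)⁻¹ := by
  have htel := Finset.sum_range_sub (fun k => Real.log ((a : ℝ) + k + 1)) n
  simp only [Nat.cast_zero, add_zero] at htel
  rw [← htel]
  apply Finset.sum_le_sum
  intro k _
  have e1 : (a : ℝ) + ((k + 1 : ℕ) : ℝ) + 1 = ((a : ℝ) + k + 1) + 1 := by push_cast; ring
  have e2 : ((a + k + 1 : ℕ) : ℝ) = (a : ℝ) + k + 1 := by push_cast; ring
  rw [e1, e2, ← one_div]
  exact log_succ_sub_le (by positivity)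

-- harmonic facts
lemma harmonic_cast (n : ℕ) : (harmonic n : ℝ) = ∑ k ∈ range n, ((k + 1 : ℕ) : ℝ)⁻¹ := by
  rw [harmonic]
  push_cast
  rfl

noncomputable def Lfun (n : ℕ) : ℝ := ∑ i ∈ range n, Real.log ((i : ℝ) + 1)

lemma sum_range_two_mul (f : ℕ → ℝ) (n : ℕ) :
    ∑ i ∈ range (2 * n), f i = ∑ j ∈ range n, (f (2 * j) + f (2 * j + 1)) := by
  induction n with
  | zero => simp
  | succ n ih =>
    rw [show 2 * (n + 1) = 2 * n + 1 + 1 from by ring, Finset.sum_range_succ,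
      Finset.sum_range_succ, ih, Finset.sum_range_succ]
    ring

lemma L_doubling (H : ℕ) :
    2 * H * Real.log 2 - (harmonic H : ℝ) ≤ Lfun (2 * H) - 2 * Lfun H
      ∧ Lfun (2 * H) - 2 * Lfun H ≤ 2 * H * Real.log 2 := by
  have hpair : Lfun (2 * H) = ∑ j ∈ range H,
      (Real.log ((2 * j : ℕ) + 1) + Real.log ((2 * j + 1 : ℕ) + 1)) := by
    rw [Lfun, sum_range_two_mul (fun i => Real.log ((i : ℝ) + 1)) H]
  have heven : ∀ j : ℕ, Real.log ((2 * j + 1 : ℕ) + 1) = Real.log 2 + Real.log ((j : ℝ) + 1) := by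
    intro j
    rw [← Real.log_mul (by norm_num) (by positivity)]
    congr 1
    push_cast
    ring
  -- error term per j : 0 ≤ log(2j+2) - log(2j+1) ≤ 1/(j+1)
  have hkey : ∀ j : ℕ, Real.log ((2 * j : ℕ) + 1) + Real.log ((2 * j + 1 : ℕ) + 1)
      = 2 * Real.log 2 + 2 * Real.log ((j : ℝ) + 1)
        - (Real.log ((2 * (j:ℝ) + 1) + 1) - Real.log (2 * (j:ℝ) + 1)) := by
    intro j
    have h2 : Real.log (2 * (j:ℝ) + 1 + 1) = Real.log 2 + Real.log ((j:ℝ) + 1) := by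
      rw [← Real.log_mul (by norm_num) (by positivity)]
      congr 1
      ring
    rw [heven j, h2]
    push_cast
    ring
  have hE0 : ∀ j : ℕ, 0 ≤ Real.log ((2 * (j:ℝ) + 1) + 1) - Real.log (2 * (j:ℝ) + 1) := by
    intro j
    have : Real.log (2 * (j:ℝ) + 1) ≤ Real.log ((2 * (j:ℝ) + 1) + 1) :=
      Real.log_le_log (by positivity) (by linarith)
    linarith
  have hE1 : ∀ j : ℕ, Real.log ((2 * (j:ℝ) + 1) + 1) - Real.log (2 * (j:ℝ) + 1)
      ≤ ((j + 1 : ℕ) : ℝ)⁻¹ := by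
    intro j
    have h := log_succ_sub_le (show (0:ℝ) < 2 * (j:ℝ) + 1 by positivity)
    have h2 : (1:ℝ) / (2 * (j:ℝ) + 1) ≤ ((j + 1 : ℕ):ℝ)⁻¹ := by
      rw [← one_div]
      apply one_div_le_one_div_of_le (by positivity)
      push_cast
      linarith
    linarith
  have hsum : Lfun (2 * H) = 2 * H * Real.log 2 + 2 * Lfun H
      - ∑ j ∈ range H, (Real.log ((2 * (j:ℝ) + 1) + 1) - Real.log (2 * (j:ℝ) + 1)) := by
    rw [hpair]
    simp_rw [hkey]
    rw [Finset.sum_sub_distrib, Finset.sum_add_distrib, Finset.sum_const, card_range,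
      nsmul_eq_mul, ← Finset.mul_sum]
    simp only [Lfun]
    push_cast
    ring
  constructor
  · have : ∑ j ∈ range H, (Real.log ((2 * (j:ℝ) + 1) + 1) - Real.log (2 * (j:ℝ) + 1))
        ≤ (harmonic H : ℝ) := by
      rw [harmonic_cast]
      exact Finset.sum_le_sum fun j _ => hE1 j
    rw [hsum]; linarith
  · have : 0 ≤ ∑ j ∈ range H, (Real.log ((2 * (j:ℝ) + 1) + 1) - Real.log (2 * (j:ℝ) + 1)) :=
      Finset.sum_nonneg fun j _ => hE0 j
    rw [hsum]; linarith

/-! ### Square sums -/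

noncomputable def gp (d : ℕ) : ℝ := if d = 0 then 0 else (d : ℝ)⁻¹
noncomputable def gg (j k : ℕ) : ℝ := gp (j + k)

lemma gp_nonneg (d : ℕ) : 0 ≤ gp d := by
  unfold gp; split_ifs <;> positivity

lemma gp_le_one (d : ℕ) : gp d ≤ 1 := by
  unfold gp
  split_ifs with h
  · norm_num
  · rw [← one_div]
    have : (1:ℝ) ≤ (d:ℝ) := by exact_mod_cast Nat.one_le_iff_ne_zero.mpr h
    apply div_le_one_of_le₀ this (by positivity)

lemma gg_nonneg (j k : ℕ) : 0 ≤ gg j k := gp_nonneg _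

lemma gg_symm (j k : ℕ) : gg j k = gg k j := by unfold gg; rw [Nat.add_comm]

noncomputable def Lambda (H : ℕ) : ℝ :=
  ∑ j ∈ range H, (Real.log ((H : ℝ) + j + 1) - Real.log ((j : ℝ) + 1))

noncomputable def Dsum (H : ℕ) : ℝ := ∑ j ∈ range H, ∑ k ∈ range H, ((j + k + 2 : ℕ) : ℝ)⁻¹

noncomputable def Tsum (H : ℕ) : ℝ := ∑ j ∈ range (H + 1), ∑ k ∈ range (H + 1), gg j k

lemma Lambda_eq (H : ℕ) : Lambda H = Lfun (2 * H) - 2 * Lfun H := by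
  have h1 : Lfun (2 * H) = Lfun H + ∑ j ∈ range H, Real.log ((H : ℝ) + j + 1) := by
    rw [Lfun, show 2 * H = H + H from by ring, Finset.sum_range_add]
    congr 1
    refine Finset.sum_congr rfl fun j _ => ?_
    congr 1
    push_cast
    ring
  rw [Lambda, Finset.sum_sub_distrib, h1, Lfun]
  ring

lemma Lambda_bounds (H : ℕ) :
    2 * H * Real.log 2 - (harmonic H : ℝ) ≤ Lambda H ∧ Lambda H ≤ 2 * H * Real.log 2 := by
  rw [Lambda_eq]
  exact L_doubling H

lemma D_le_Lambda (H : ℕ) : Dsum H ≤ Lambda H := by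
  rw [Dsum, Lambda]
  apply Finset.sum_le_sum
  intro j _
  have h1 : ∑ k ∈ range H, ((j + k + 2 : ℕ) : ℝ)⁻¹
      = ∑ k ∈ range H, (((j + 1) + k + 1 : ℕ) : ℝ)⁻¹ := by
    refine Finset.sum_congr rfl fun k _ => ?_
    congr 2
    omega
  rw [h1]
  have h2 := sum_inv_le_log (j + 1) H (by omega)
  calc ∑ k ∈ range H, (((j + 1) + k + 1 : ℕ) : ℝ)⁻¹
      ≤ Real.log (((j + 1 : ℕ) : ℝ) + H) - Real.log ((j + 1 : ℕ) : ℝ) := h2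
    _ = Real.log ((H : ℝ) + j + 1) - Real.log ((j : ℝ) + 1) := by
        rw [show ((j + 1 : ℕ) : ℝ) + H = (H : ℝ) + j + 1 from by push_cast; ring,
          show ((j + 1 : ℕ) : ℝ) = (j : ℝ) + 1 from by push_cast; ring]

lemma Lambda_sub_le_D (H : ℕ) : Lambda H - Real.log ((H : ℝ) + 1) ≤ Dsum H := by
  set F : ℕ → ℝ := fun j => Real.log ((H : ℝ) + j + 1) - Real.log ((j : ℝ) + 1) with hF
  have hstep : ∀ j, F (j + 1) ≤ ∑ k ∈ range H, ((j + k + 2 : ℕ) : ℝ)⁻¹ := by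
    intro j
    have h1 : ∑ k ∈ range H, ((j + k + 2 : ℕ) : ℝ)⁻¹
        = ∑ k ∈ range H, (((j + 1) + k + 1 : ℕ) : ℝ)⁻¹ := by
      refine Finset.sum_congr rfl fun k _ => ?_
      congr 2
      omega
    rw [h1]
    have h2 := log_le_sum_inv (j + 1) H
    calc F (j + 1) = Real.log (((j + 1 : ℕ) : ℝ) + H + 1) - Real.log (((j + 1 : ℕ) : ℝ) + 1) := by
          rw [hF]
          simp only []
          rw [show (H : ℝ) + ((j : ℕ) + 1 : ℕ) + 1 = ((j + 1 : ℕ) : ℝ) + H + 1 from by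
            push_cast; ring, show ((j + 1 : ℕ) : ℝ) + 1 = (((j : ℕ) + 1 : ℕ) : ℝ) + 1 from by
            push_cast; ring]
      _ ≤ _ := h2
  have hsum : ∑ j ∈ range H, F (j + 1) ≤ Dsum H := by
    rw [Dsum]
    exact Finset.sum_le_sum fun j _ => hstep j
  have hshift : ∑ j ∈ range H, F (j + 1) = Lambda H + F H - F 0 := by
    have e1 : ∑ j ∈ range (H + 1), F j = ∑ j ∈ range H, F (j + 1) + F 0 :=
      Finset.sum_range_succ' F H
    have e2 : ∑ j ∈ range (H + 1), F j = Lambda H + F H := by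
      rw [Finset.sum_range_succ, Lambda]
    rw [e2] at e1
    linarith
  have hFH : 0 ≤ F H := by
    rw [hF]
    simp only []
    have hc : (0:ℝ) ≤ (H:ℝ) := Nat.cast_nonneg H
    have := Real.log_le_log (show (0:ℝ) < (H:ℝ) + 1 by positivity)
      (show (H:ℝ) + 1 ≤ (H:ℝ) + H + 1 by linarith)
    linarith
  have hF0 : F 0 = Real.log ((H : ℝ) + 1) := by
    rw [hF]
    norm_num
  linarith

lemma T_eq (H : ℕ) : Tsum H = Dsum H + 2 * (harmonic H : ℝ) := by
  have row0 : ∑ k ∈ range (H + 1), gg 0 k = (harmonic H : ℝ) := by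
    rw [Finset.sum_range_succ', harmonic_cast]
    have h1 : ∀ k : ℕ, gg 0 (k + 1) = ((k + 1 : ℕ) : ℝ)⁻¹ := by
      intro k
      simp only [gg, gp, Nat.zero_add]
      rw [if_neg (by omega)]
    simp_rw [h1]
    simp [gg, gp]
  have rowS : ∀ j : ℕ, ∑ k ∈ range (H + 1), gg (j + 1) k
      = (∑ k ∈ range H, ((j + k + 2 : ℕ) : ℝ)⁻¹) + ((j + 1 : ℕ) : ℝ)⁻¹ := by
    intro j
    rw [Finset.sum_range_succ']
    have e0 : gg (j + 1) 0 = ((j + 1 : ℕ) : ℝ)⁻¹ := by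
      simp [gg, gp]
    have e1 : ∀ k : ℕ, gg (j + 1) (k + 1) = ((j + k + 2 : ℕ) : ℝ)⁻¹ := by
      intro k
      simp only [gg, gp]
      rw [if_neg (by omega)]
      push_cast
      ring_nf
    simp_rw [e1, e0]
  rw [Tsum, Finset.sum_range_succ' (fun j => ∑ k ∈ range (H + 1), gg j k) H]
  simp_rw [rowS]
  rw [row0, Finset.sum_add_distrib, Dsum, harmonic_cast]
  ring

lemma row_bound (H : ℕ) (j : ℕ) :
    ∑ k ∈ range (H + 1), gg j k ≤ 1 + (harmonic H : ℝ) := by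
  rw [Finset.sum_range_succ']
  have h1 : ∀ k : ℕ, k ∈ range H → gg j (k + 1) ≤ ((k + 1 : ℕ) : ℝ)⁻¹ := by
    intro k _
    simp only [gg, gp]
    rw [if_neg (by omega)]
    have hpos : (0:ℝ) < ((k + 1 : ℕ) : ℝ) := by exact_mod_cast Nat.succ_pos k
    have hle : ((k + 1 : ℕ) : ℝ) ≤ ((j + (k + 1) : ℕ) : ℝ) := by exact_mod_cast by omega
    exact inv_anti₀ hpos hle
  calc ∑ k ∈ range H, gg j (k + 1) + gg j 0
      ≤ ∑ k ∈ range H, ((k + 1 : ℕ) : ℝ)⁻¹ + 1 := by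
        gcongr with k hk
        · exact h1 k hk
        · exact gp_le_one _
    _ = 1 + (harmonic H : ℝ) := by rw [harmonic_cast]; ring


/-! ### edge probability facts -/


lemma four_log_two_pos : (0:ℝ) < 4 * Real.log 2 := by
  have := Real.log_two_gt_d9; linarith

lemma ccr_pos : 0 < ccr := by
  rw [ccr]; positivity

lemma ccr_le_half : ccr ≤ 1 / 2 := by
  rw [ccr, div_le_div_iff₀ four_log_two_pos (by norm_num)]
  have := Real.log_two_gt_d9; linarith

lemma ccr_mul : ccr * (4 * Real.log 2) = 1 := by
  rw [ccr]; field_simp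

noncomputable def Ffun (N : ℕ) (d : ℕ) : ℝ := if d = 0 then 0 else ccr / ((N:ℝ) * d)

lemma Ffun_nonneg (N d : ℕ) : 0 ≤ Ffun N d := by
  unfold Ffun; split_ifs
  · exact le_refl 0
  · exact div_nonneg (le_of_lt ccr_pos) (by positivity)

lemma Ffun_eq (N d : ℕ) : Ffun N d = (ccr / N) * gp d := by
  unfold Ffun gp
  split_ifs with h
  · rw [mul_zero]
  · rw [div_mul_eq_div_div_swap, div_div]
    ring

lemma torusDist_self (N : ℕ) [NeZero N] (v : Vtx N) : torusDist N v v = 0 := by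
  simp [torusDist, rhoN_zero]

lemma torusDist_ne_zero (N : ℕ) [NeZero N] {u v : Vtx N} (h : u ≠ v) :
    torusDist N u v ≠ 0 := by
  intro h0
  apply h
  rw [torusDist] at h0
  have h1 : rhoN N (u.1 - v.1) = 0 := by omega
  have h2 : rhoN N (u.2 - v.2) = 0 := by omega
  have e1 := (rhoN_eq_zero_iff N _).mp h1
  have e2 := (rhoN_eq_zero_iff N _).mp h2
  rw [sub_eq_zero] at e1 e2
  exact Prod.ext e1 e2

lemma edgeProb_eq_Ffun (N : ℕ) [NeZero N] (u v : Vtx N) :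
    edgeProb N ccr u v = Ffun N (torusDist N u v) := by
  by_cases h : u = v
  · subst h
    rw [edgeProb, if_pos rfl, torusDist_self, Ffun, if_pos rfl]
  · have hd := torusDist_ne_zero N h
    rw [edgeProb, if_neg h, Ffun, if_neg hd]
    apply min_eq_left
    have hd1 : (1:ℝ) ≤ (N:ℝ) * (torusDist N u v : ℝ) := by
      have h1 : 1 ≤ N * torusDist N u v :=
        Nat.one_le_iff_ne_zero.mpr (Nat.mul_ne_zero (NeZero.ne N) hd)
      exact_mod_cast h1
    rw [div_le_one (by linarith)]
    have := ccr_le_half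
    linarith

lemma harmonic_nonneg' (H : ℕ) : 0 ≤ (harmonic H : ℝ) := by
  rw [harmonic_cast]; positivity

lemma ite_filter_sum_bound (H : ℕ) (C : ℝ) (hC : 0 ≤ C) :
    ∑ j ∈ range (H + 1), (if j = 0 ∨ j = H then C else 0) ≤ 2 * C := by
  have hsubs : (range (H + 1)).filter (fun j => j = 0 ∨ j = H) ⊆ {0, H} := by
    intro j hj
    simp only [Finset.mem_filter] at hj
    rcases hj.2 with h | h <;> simp [h]
  have hcard : ((range (H + 1)).filter (fun j => j = 0 ∨ j = H)).card ≤ 2 :=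
    (Finset.card_le_card hsubs).trans ((Finset.card_insert_le _ _).trans (by simp))
  calc ∑ j ∈ range (H + 1), (if j = 0 ∨ j = H then C else 0)
      = ∑ j ∈ (range (H + 1)).filter (fun j => j = 0 ∨ j = H), C := by
        rw [Finset.sum_filter]
    _ = ((range (H + 1)).filter (fun j => j = 0 ∨ j = H)).card • C := by
        rw [Finset.sum_const]
    _ ≤ 2 * C := by
        rw [nsmul_eq_mul]
        apply mul_le_mul_of_nonneg_right _ hC
        exact_mod_cast hcard

lemma mul_le_four {a b : ℝ} (ha0 : 0 ≤ a) (ha : a ≤ 2) (hb0 : 0 ≤ b) (hb : b ≤ 2) :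
    a * b ≤ 4 := by nlinarith

lemma diff_log_bound {a b l : ℝ} (h0 : 0 ≤ b - 2 * a) (h1 : b - 2 * a ≤ 1)
    (l0 : 0 ≤ l) (l1 : l ≤ 1) : -(4:ℝ) ≤ 8 * a * l - 4 * b * l ∧ 8 * a * l - 4 * b * l ≤ 0 := by
  constructor <;> nlinarith

lemma full_sum_bound (N : ℕ) [NeZero N] (hN : 2 ≤ N) (v : Vtx N) :
    |(∑ u ∈ Finset.univ.erase v, edgeProb N ccr u v) - 1| ≤ 90 * (N : ℝ) ^ (-(1:ℝ)/3) := by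
  classical
  obtain ⟨H, hHdef⟩ : ∃ H : ℕ, H = N / 2 := ⟨N / 2, rfl⟩
  have hH1 : 1 ≤ H := by omega
  have h2H : 2 * H ≤ N := by omega
  have hN2H : N ≤ 2 * H + 1 := by omega
  have hNpos : 0 < N := by omega
  have hX0 : (0:ℝ) < (N:ℝ) := by exact_mod_cast hNpos
  have hN1 : (1:ℝ) ≤ (N:ℝ) := by exact_mod_cast hNpos
  have hharm0 : 0 ≤ (harmonic H : ℝ) := harmonic_nonneg' H
  -- the fibered square sum
  obtain ⟨Ssum, hSdef⟩ : ∃ S : ℝ, S = ∑ j ∈ range (H + 1), ∑ k ∈ range (H + 1),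
    (fib N j : ℝ) * (fib N k : ℝ) * gg j k := ⟨_, rfl⟩
  -- step 1 : the sum over the torus equals (ccr/N) * Ssum
  have hzs : ∑ u ∈ Finset.univ.erase v, edgeProb N ccr u v = (ccr / N) * Ssum := by
    calc ∑ u ∈ Finset.univ.erase v, edgeProb N ccr u v
        = ∑ u ∈ Finset.univ.erase v, Ffun N (torusDist N u v) :=
          Finset.sum_congr rfl fun u _ => edgeProb_eq_Ffun N u v
      _ = ∑ u : Vtx N, Ffun N (torusDist N u v) :=
          Finset.sum_erase _ (by rw [torusDist_self, Ffun, if_pos rfl])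
      _ = ∑ w : Vtx N, Ffun N (rhoN N w.1 + rhoN N w.2) := sum_dist_translate N v _
      _ = ∑ w : Vtx N, (ccr / N) * gg (rhoN N w.1) (rhoN N w.2) :=
          Finset.sum_congr rfl fun w _ => Ffun_eq N _
      _ = (ccr / N) * ∑ w : Vtx N, gg (rhoN N w.1) (rhoN N w.2) := by
          rw [Finset.mul_sum]
      _ = (ccr / N) * Ssum := by rw [sum_vtx_fiber N gg, hSdef, hHdef]
  -- step 2 : |Ssum - 4 Tsum| ≤ 16 (1 + harmonic H)
  have hterm : ∀ j ∈ range (H + 1), ∀ k ∈ range (H + 1),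
      |(fib N j : ℝ) * (fib N k : ℝ) * gg j k - 4 * gg j k| ≤
        (if j = 0 ∨ j = H then 4 * gg j k else 0)
          + (if k = 0 ∨ k = H then 4 * gg j k else 0) := by
    intro j hj k hk
    have hjH : j < H + 1 := Finset.mem_range.mp hj
    have hkH : k < H + 1 := Finset.mem_range.mp hk
    have hgg := gg_nonneg j k
    have hfj : ((fib N j : ℕ) : ℝ) ≤ 2 := by exact_mod_cast fib_le_two N j
    have hfk : ((fib N k : ℕ) : ℝ) ≤ 2 := by exact_mod_cast fib_le_two N k
    have hfj0 : (0:ℝ) ≤ (fib N j : ℝ) := Nat.cast_nonneg _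
    have hfk0 : (0:ℝ) ≤ (fib N k : ℝ) := Nat.cast_nonneg _
    have habs : |(fib N j : ℝ) * (fib N k : ℝ) * gg j k - 4 * gg j k| ≤ 4 * gg j k := by
      have hp4 : (fib N j : ℝ) * (fib N k : ℝ) ≤ 4 := mul_le_four hfj0 hfj hfk0 hfk
      have hp : (fib N j : ℝ) * (fib N k : ℝ) * gg j k ≤ 4 * gg j k :=
        mul_le_mul_of_nonneg_right hp4 hgg
      have hp0 : 0 ≤ (fib N j : ℝ) * (fib N k : ℝ) * gg j k := by positivity
      rw [abs_le]
      constructor <;> linarith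
    by_cases hjb : j = 0 ∨ j = H
    · rw [if_pos hjb]
      have h0 : (0:ℝ) ≤ (if k = 0 ∨ k = H then 4 * gg j k else 0) := by
        split_ifs
        · linarith
        · exact le_refl 0
      linarith
    · by_cases hkb : k = 0 ∨ k = H
      · rw [if_pos hkb, if_neg hjb]
        linarith
      · rw [if_neg hjb, if_neg hkb]
        push_neg at hjb hkb
        have hj2 : fib N j = 2 := fib_eq_two N (by omega) (by omega)
        have hk2 : fib N k = 2 := fib_eq_two N (by omega) (by omega)
        rw [hj2, hk2]
        have hz : ((2:ℕ):ℝ) * ((2:ℕ):ℝ) * gg j k - 4 * gg j k = 0 := by push_cast; ring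
        rw [hz, abs_zero]
        norm_num
  have hsubeq : Ssum - 4 * Tsum H = ∑ j ∈ range (H + 1), ∑ k ∈ range (H + 1),
      ((fib N j : ℝ) * (fib N k : ℝ) * gg j k - 4 * gg j k) := by
    rw [hSdef, Tsum, Finset.mul_sum, ← Finset.sum_sub_distrib]
    refine Finset.sum_congr rfl fun j _ => ?_
    rw [Finset.mul_sum, ← Finset.sum_sub_distrib]
  have hA : ∑ j ∈ range (H + 1), ∑ k ∈ range (H + 1),
      (if j = 0 ∨ j = H then 4 * gg j k else 0) ≤ 8 * (1 + (harmonic H : ℝ)) := by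
    have h1 : ∀ j ∈ range (H + 1), ∑ k ∈ range (H + 1), (if j = 0 ∨ j = H then 4 * gg j k else 0)
        ≤ (if j = 0 ∨ j = H then 4 * (1 + (harmonic H : ℝ)) else 0) := by
      intro j _
      by_cases hc : j = 0 ∨ j = H
      · simp only [if_pos hc]
        rw [← Finset.mul_sum]
        exact mul_le_mul_of_nonneg_left (row_bound H j) (by norm_num)
      · simp only [if_neg hc, Finset.sum_const_zero]
        exact le_refl 0
    calc ∑ j ∈ range (H + 1), ∑ k ∈ range (H + 1), (if j = 0 ∨ j = H then 4 * gg j k else 0)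
        ≤ ∑ j ∈ range (H + 1), (if j = 0 ∨ j = H then 4 * (1 + (harmonic H : ℝ)) else 0) :=
          Finset.sum_le_sum h1
      _ ≤ 2 * (4 * (1 + (harmonic H : ℝ))) :=
          ite_filter_sum_bound H _ (by linarith)
      _ = 8 * (1 + (harmonic H : ℝ)) := by ring
  have hB : ∑ j ∈ range (H + 1), ∑ k ∈ range (H + 1),
      (if k = 0 ∨ k = H then 4 * gg j k else 0) ≤ 8 * (1 + (harmonic H : ℝ)) := by
    rw [Finset.sum_comm]
    have h1 : ∀ k ∈ range (H + 1), ∑ j ∈ range (H + 1), (if k = 0 ∨ k = H then 4 * gg j k else 0)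
        ≤ (if k = 0 ∨ k = H then 4 * (1 + (harmonic H : ℝ)) else 0) := by
      intro k _
      by_cases hc : k = 0 ∨ k = H
      · simp only [if_pos hc]
        rw [← Finset.mul_sum]
        have hs : ∑ j ∈ range (H + 1), gg j k = ∑ j ∈ range (H + 1), gg k j :=
          Finset.sum_congr rfl fun j _ => gg_symm j k
        rw [hs]
        exact mul_le_mul_of_nonneg_left (row_bound H k) (by norm_num)
      · simp only [if_neg hc, Finset.sum_const_zero]
        exact le_refl 0
    calc ∑ k ∈ range (H + 1), ∑ j ∈ range (H + 1), (if k = 0 ∨ k = H then 4 * gg j k else 0)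
        ≤ ∑ k ∈ range (H + 1), (if k = 0 ∨ k = H then 4 * (1 + (harmonic H : ℝ)) else 0) :=
          Finset.sum_le_sum h1
      _ ≤ 2 * (4 * (1 + (harmonic H : ℝ))) :=
          ite_filter_sum_bound H _ (by linarith)
      _ = 8 * (1 + (harmonic H : ℝ)) := by ring
  have hST : |Ssum - 4 * Tsum H| ≤ 16 * (1 + (harmonic H : ℝ)) := by
    rw [hsubeq]
    calc |∑ j ∈ range (H + 1), ∑ k ∈ range (H + 1),
          ((fib N j : ℝ) * (fib N k : ℝ) * gg j k - 4 * gg j k)|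
        ≤ ∑ j ∈ range (H + 1), |∑ k ∈ range (H + 1),
            ((fib N j : ℝ) * (fib N k : ℝ) * gg j k - 4 * gg j k)| :=
          Finset.abs_sum_le_sum_abs _ _
      _ ≤ ∑ j ∈ range (H + 1), ∑ k ∈ range (H + 1),
            |(fib N j : ℝ) * (fib N k : ℝ) * gg j k - 4 * gg j k| :=
          Finset.sum_le_sum fun j _ => Finset.abs_sum_le_sum_abs _ _
      _ ≤ ∑ j ∈ range (H + 1), ∑ k ∈ range (H + 1),
            ((if j = 0 ∨ j = H then 4 * gg j k else 0)
              + (if k = 0 ∨ k = H then 4 * gg j k else 0)) :=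
          Finset.sum_le_sum fun j hj => Finset.sum_le_sum fun k hk => hterm j hj k hk
      _ = (∑ j ∈ range (H + 1), ∑ k ∈ range (H + 1), (if j = 0 ∨ j = H then 4 * gg j k else 0))
          + (∑ j ∈ range (H + 1), ∑ k ∈ range (H + 1),
              (if k = 0 ∨ k = H then 4 * gg j k else 0)) := by
          rw [← Finset.sum_add_distrib]
          exact Finset.sum_congr rfl fun j _ => Finset.sum_add_distrib
      _ ≤ 8 * (1 + (harmonic H : ℝ)) + 8 * (1 + (harmonic H : ℝ)) := add_le_add hA hB
      _ = 16 * (1 + (harmonic H : ℝ)) := by ring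
  -- step 3 : |Tsum - 2 H log 2| bound
  have hD1 := D_le_Lambda H
  have hD2 := Lambda_sub_le_D H
  obtain ⟨hL1, hL2⟩ := Lambda_bounds H
  have hTD := T_eq H
  have hlogH1 : 0 ≤ Real.log ((H:ℝ) + 1) := Real.log_nonneg (by
    have : (0:ℝ) ≤ (H:ℝ) := Nat.cast_nonneg H
    linarith)
  have hT : |Tsum H - 2 * (H:ℝ) * Real.log 2|
      ≤ 3 * (harmonic H : ℝ) + Real.log ((H:ℝ) + 1) := by
    rw [abs_le]
    constructor <;> linarith
  -- step 4 : comparisons with log N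
  have hHN1 : (H:ℝ) + 1 ≤ (N:ℝ) := by exact_mod_cast (by omega : H + 1 ≤ N)
  have hHleN : (H:ℝ) ≤ (N:ℝ) := by exact_mod_cast (by omega : H ≤ N)
  have hlogN0 : 0 ≤ Real.log (N:ℝ) := Real.log_nonneg hN1
  have hHpos : (0:ℝ) < (H:ℝ) := by exact_mod_cast hH1
  have hharm : (harmonic H : ℝ) ≤ 1 + Real.log (N:ℝ) := by
    refine (harmonic_le_one_add_log H).trans ?_
    have := Real.log_le_log hHpos hHleN
    linarith
  have hlogH1N : Real.log ((H:ℝ) + 1) ≤ Real.log (N:ℝ) :=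
    Real.log_le_log (by positivity) hHN1
  have hlog2u : Real.log 2 ≤ 1 := by
    have := Real.log_two_lt_d9; linarith
  have hlog2l : 0 < Real.log 2 := by
    have := Real.log_two_gt_d9; linarith
  have h2HN : (0:ℝ) ≤ (N:ℝ) - 2 * (H:ℝ) ∧ (N:ℝ) - 2 * (H:ℝ) ≤ 1 := by
    constructor
    · have : (2 * H : ℝ) ≤ (N:ℝ) := by exact_mod_cast h2H
      linarith
    · have : (N:ℝ) ≤ (2 * H : ℝ) + 1 := by exact_mod_cast hN2H
      push_cast at this ⊢
      linarith
  have hS4N : |Ssum - 4 * (N:ℝ) * Real.log 2| ≤ 35 * (2 + Real.log (N:ℝ)) := by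
    obtain ⟨hST1, hST2⟩ := abs_le.mp hST
    obtain ⟨hT1, hT2⟩ := abs_le.mp hT
    obtain ⟨hq1, hq2⟩ := h2HN
    obtain ⟨hq3b, hq3a⟩ := diff_log_bound (a := (H:ℝ)) (b := (N:ℝ)) (l := Real.log 2)
      hq1 hq2 hlog2l.le hlog2u
    rw [abs_le]
    constructor <;> linarith
  -- step 5 : conclude
  have hl2ne : Real.log 2 ≠ 0 := ne_of_gt hlog2l
  have hNne : (N:ℝ) ≠ 0 := ne_of_gt hX0
  have h1 : (ccr / (N:ℝ)) * (4 * (N:ℝ) * Real.log 2) = 1 := by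
    field_simp [ccr]
    linear_combination ccr_mul
  have he : (ccr / (N:ℝ)) * Ssum - 1 = (ccr / (N:ℝ)) * (Ssum - 4 * (N:ℝ) * Real.log 2) := by
    rw [mul_sub, h1]
  have h23 : (1:ℝ) ≤ (N:ℝ) ^ ((2:ℝ)/3) := by
    rw [show (1:ℝ) = (N:ℝ) ^ (0:ℝ) from (Real.rpow_zero _).symm]
    exact Real.rpow_le_rpow_of_exponent_le hN1 (by norm_num)
  have hlogle : Real.log (N:ℝ) ≤ 3 * (N:ℝ) ^ ((2:ℝ)/3) := by
    have h13 : Real.log ((N:ℝ) ^ ((1:ℝ)/3)) = (1/3) * Real.log (N:ℝ) := by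
      rw [Real.log_rpow hX0]
    have hle : Real.log ((N:ℝ) ^ ((1:ℝ)/3)) ≤ (N:ℝ) ^ ((1:ℝ)/3) - 1 :=
      Real.log_le_sub_one_of_pos (by positivity)
    have h1323 : (N:ℝ) ^ ((1:ℝ)/3) ≤ (N:ℝ) ^ ((2:ℝ)/3) :=
      Real.rpow_le_rpow_of_exponent_le hN1 (by norm_num)
    linarith
  have hP5 : 2 + Real.log (N:ℝ) ≤ 5 * (N:ℝ) ^ ((2:ℝ)/3) := by linarith
  have hm : (N:ℝ) ^ ((2:ℝ)/3) / (N:ℝ) = (N:ℝ) ^ (-(1:ℝ)/3) := by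
    rw [show -(1:ℝ)/3 = (2:ℝ)/3 - 1 by norm_num, Real.rpow_sub hX0, Real.rpow_one]
  rw [hzs, he, abs_mul, abs_of_pos (show (0:ℝ) < ccr / N by
    exact div_pos ccr_pos hX0)]
  have hnn23 : (0:ℝ) ≤ (N:ℝ) ^ ((2:ℝ)/3) := by positivity
  calc (ccr / N) * |Ssum - 4 * (N:ℝ) * Real.log 2|
      ≤ (ccr / N) * (35 * (5 * (N:ℝ) ^ ((2:ℝ)/3))) := by
        apply mul_le_mul_of_nonneg_left _ (le_of_lt (div_pos ccr_pos hX0))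
        calc |Ssum - 4 * (N:ℝ) * Real.log 2| ≤ 35 * (2 + Real.log (N:ℝ)) := hS4N
          _ ≤ 35 * (5 * (N:ℝ) ^ ((2:ℝ)/3)) := by linarith
    _ = 175 * ccr * ((N:ℝ) ^ ((2:ℝ)/3) / (N:ℝ)) := by ring
    _ ≤ 175 * (1/2) * ((N:ℝ) ^ ((2:ℝ)/3) / (N:ℝ)) := by
        have hq : (0:ℝ) ≤ (N:ℝ) ^ ((2:ℝ)/3) / (N:ℝ) := by positivity
        exact mul_le_mul_of_nonneg_right (by linarith [ccr_le_half]) hq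
    _ = (175/2) * (N:ℝ) ^ (-(1:ℝ)/3) := by rw [hm]; ring
    _ ≤ 90 * (N:ℝ) ^ (-(1:ℝ)/3) := by
        have hq : (0:ℝ) ≤ (N:ℝ) ^ (-(1:ℝ)/3) := by positivity
        exact mul_le_mul_of_nonneg_right (by norm_num) hq

lemma removal_bound (K : ℝ) (hK : 0 < K) (N : ℕ) [NeZero N] (hN : 2 ≤ N)
    (A : Finset (Vtx N)) (hA : (A.card : ℝ) ≤ K * (N : ℝ) ^ ((4:ℝ)/3)) (v : Vtx N) :
    ∑ u ∈ A, Ffun N (torusDist N u v) ≤ (8 + K) * (N : ℝ) ^ (-(1:ℝ)/3) := by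
  classical
  obtain ⟨H, hHdef⟩ : ∃ H : ℕ, H = N / 2 := ⟨N / 2, rfl⟩
  have hNpos : 0 < N := by omega
  have hX0 : (0:ℝ) < (N:ℝ) := by exact_mod_cast hNpos
  have hN1 : (1:ℝ) ≤ (N:ℝ) := by exact_mod_cast hNpos
  obtain ⟨r, hrdef⟩ : ∃ r : ℕ, r = ⌈(N:ℝ) ^ ((2:ℝ)/3)⌉₊ := ⟨_, rfl⟩
  have h23 : (1:ℝ) ≤ (N:ℝ) ^ ((2:ℝ)/3) := by
    rw [show (1:ℝ) = (N:ℝ) ^ (0:ℝ) from (Real.rpow_zero _).symm]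
    exact Real.rpow_le_rpow_of_exponent_le hN1 (by norm_num)
  have hrlow : (N:ℝ) ^ ((2:ℝ)/3) ≤ (r:ℝ) := by rw [hrdef]; exact Nat.le_ceil _
  have hrup : (r:ℝ) ≤ 2 * (N:ℝ) ^ ((2:ℝ)/3) := by
    have h := Nat.ceil_lt_add_one (show (0:ℝ) ≤ (N:ℝ) ^ ((2:ℝ)/3) by positivity)
    rw [hrdef]
    linarith
  have hm : (N:ℝ) ^ ((2:ℝ)/3) / (N:ℝ) = (N:ℝ) ^ (-(1:ℝ)/3) := by
    rw [show -(1:ℝ)/3 = (2:ℝ)/3 - 1 by norm_num, Real.rpow_sub hX0, Real.rpow_one]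
  have hsplitsum : ∑ u ∈ A, Ffun N (torusDist N u v)
      = (∑ u ∈ A, (if torusDist N u v ≤ r then Ffun N (torusDist N u v) else 0))
        + (∑ u ∈ A, (if torusDist N u v ≤ r then 0 else Ffun N (torusDist N u v))) := by
    rw [← Finset.sum_add_distrib]
    refine Finset.sum_congr rfl fun u _ => ?_
    split_ifs <;> ring
  -- far part
  have hfar : ∑ u ∈ A, (if torusDist N u v ≤ r then 0 else Ffun N (torusDist N u v))
      ≤ (A.card : ℝ) * (ccr / ((N:ℝ) * ((r:ℝ) + 1))) := by
    have hb : ∀ u ∈ A, (if torusDist N u v ≤ r then 0 else Ffun N (torusDist N u v))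
        ≤ ccr / ((N:ℝ) * ((r:ℝ) + 1)) := by
      intro u _
      have hpos : (0:ℝ) < (N:ℝ) * ((r:ℝ) + 1) := by positivity
      split_ifs with h
      · exact div_nonneg ccr_pos.le hpos.le
      · have hd : r + 1 ≤ torusDist N u v := by omega
        have hdne : torusDist N u v ≠ 0 := by omega
        rw [Ffun, if_neg hdne]
        have hdd : (N:ℝ) * ((r:ℝ) + 1) ≤ (N:ℝ) * (torusDist N u v : ℝ) := by
          apply mul_le_mul_of_nonneg_left _ hX0.le
          exact_mod_cast hd
        exact div_le_div_of_nonneg_left ccr_pos.le hpos hdd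
    calc ∑ u ∈ A, (if torusDist N u v ≤ r then 0 else Ffun N (torusDist N u v))
        ≤ A.card • (ccr / ((N:ℝ) * ((r:ℝ) + 1))) := Finset.sum_le_card_nsmul A _ _ hb
      _ = (A.card : ℝ) * (ccr / ((N:ℝ) * ((r:ℝ) + 1))) := by rw [nsmul_eq_mul]
  have e53 : (N:ℝ) ^ ((5:ℝ)/3) = (N:ℝ) * (N:ℝ) ^ ((2:ℝ)/3) := by
    rw [show (5:ℝ)/3 = 1 + 2/3 by norm_num, Real.rpow_add hX0, Real.rpow_one]
  have hden : (N:ℝ) ^ ((5:ℝ)/3) ≤ (N:ℝ) * ((r:ℝ) + 1) := by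
    rw [e53]
    apply mul_le_mul_of_nonneg_left _ hX0.le
    linarith
  have hccr2 : ccr / ((N:ℝ) * ((r:ℝ) + 1)) ≤ (1/2) / (N:ℝ) ^ ((5:ℝ)/3) :=
    div_le_div₀ (by norm_num) ccr_le_half (by positivity) hden
  have einv : (N:ℝ) ^ ((4:ℝ)/3) / (N:ℝ) ^ ((5:ℝ)/3) = (N:ℝ) ^ (-(1:ℝ)/3) := by
    rw [← Real.rpow_sub hX0]
    norm_num
  have hfar2 : (A.card : ℝ) * (ccr / ((N:ℝ) * ((r:ℝ) + 1)))
      ≤ (K/2) * (N:ℝ) ^ (-(1:ℝ)/3) := by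
    have hc0 : (0:ℝ) ≤ ccr / ((N:ℝ) * ((r:ℝ) + 1)) := div_nonneg ccr_pos.le (by positivity)
    calc (A.card : ℝ) * (ccr / ((N:ℝ) * ((r:ℝ) + 1)))
        ≤ (K * (N:ℝ) ^ ((4:ℝ)/3)) * (ccr / ((N:ℝ) * ((r:ℝ) + 1))) :=
          mul_le_mul_of_nonneg_right hA hc0
      _ ≤ (K * (N:ℝ) ^ ((4:ℝ)/3)) * ((1/2) / (N:ℝ) ^ ((5:ℝ)/3)) :=
          mul_le_mul_of_nonneg_left hccr2 (mul_nonneg hK.le (by positivity))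
      _ = (K/2) * ((N:ℝ) ^ ((4:ℝ)/3) / (N:ℝ) ^ ((5:ℝ)/3)) := by ring
      _ = (K/2) * (N:ℝ) ^ (-(1:ℝ)/3) := by rw [einv]
  -- near part
  have hnear : ∑ u ∈ A, (if torusDist N u v ≤ r then Ffun N (torusDist N u v) else 0)
      ≤ 8 * (N:ℝ) ^ (-(1:ℝ)/3) := by
    have hstep1 : ∑ u ∈ A, (if torusDist N u v ≤ r then Ffun N (torusDist N u v) else 0)
        ≤ ∑ u : Vtx N, (if torusDist N u v ≤ r then Ffun N (torusDist N u v) else 0) := by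
      apply Finset.sum_le_sum_of_subset_of_nonneg (Finset.subset_univ A)
      intro u _ _
      split_ifs
      · exact Ffun_nonneg N _
      · exact le_refl 0
    have hstep2 : ∑ u : Vtx N, (if torusDist N u v ≤ r then Ffun N (torusDist N u v) else 0)
        = ∑ w : Vtx N, (if rhoN N w.1 + rhoN N w.2 ≤ r
            then Ffun N (rhoN N w.1 + rhoN N w.2) else 0) :=
      sum_dist_translate N v (fun d => if d ≤ r then Ffun N d else 0)
    have hstep3 : ∑ w : Vtx N, (if rhoN N w.1 + rhoN N w.2 ≤ r
          then Ffun N (rhoN N w.1 + rhoN N w.2) else 0)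
        = (ccr / N) * ∑ j ∈ range (H + 1), ∑ k ∈ range (H + 1),
            (fib N j : ℝ) * (fib N k : ℝ) * (if j + k ≤ r then gg j k else 0) := by
      have hGeq : ∀ j k : ℕ, (if j + k ≤ r then Ffun N (j + k) else 0)
          = (ccr / N) * (if j + k ≤ r then gg j k else 0) := by
        intro j k
        split_ifs
        · exact Ffun_eq N (j + k)
        · rw [mul_zero]
      calc ∑ w : Vtx N, (if rhoN N w.1 + rhoN N w.2 ≤ r
            then Ffun N (rhoN N w.1 + rhoN N w.2) else 0)
          = ∑ w : Vtx N, (ccr / N) * (if rhoN N w.1 + rhoN N w.2 ≤ r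
              then gg (rhoN N w.1) (rhoN N w.2) else 0) :=
            Finset.sum_congr rfl fun w _ => hGeq _ _
        _ = (ccr / N) * ∑ w : Vtx N, (fun j k => if j + k ≤ r then gg j k else 0)
              (rhoN N w.1) (rhoN N w.2) := by rw [Finset.mul_sum]
        _ = _ := by
            rw [sum_vtx_fiber N (fun j k => if j + k ≤ r then gg j k else 0), hHdef]
    have hfib4 : ∑ j ∈ range (H + 1), ∑ k ∈ range (H + 1),
          (fib N j : ℝ) * (fib N k : ℝ) * (if j + k ≤ r then gg j k else 0)
        ≤ 4 * ∑ j ∈ range (H + 1), ∑ k ∈ range (H + 1),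
            (if j + k ≤ r then gg j k else 0) := by
      rw [Finset.mul_sum]
      refine Finset.sum_le_sum fun j _ => ?_
      rw [Finset.mul_sum]
      refine Finset.sum_le_sum fun k _ => ?_
      have hg0 : (0:ℝ) ≤ (if j + k ≤ r then gg j k else 0) := by
        split_ifs
        · exact gg_nonneg j k
        · exact le_refl 0
      have hfj : ((fib N j : ℕ) : ℝ) ≤ 2 := by exact_mod_cast fib_le_two N j
      have hfk : ((fib N k : ℕ) : ℝ) ≤ 2 := by exact_mod_cast fib_le_two N k
      exact mul_le_mul_of_nonneg_right
        (mul_le_four (Nat.cast_nonneg _) hfj (Nat.cast_nonneg _) hfk) hg0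
    have htri : ∑ j ∈ range (H + 1), ∑ k ∈ range (H + 1), (if j + k ≤ r then gg j k else 0)
        ≤ 2 * (r:ℝ) := by
      rw [← Finset.sum_product' (range (H + 1)) (range (H + 1))
        (fun j k => if j + k ≤ r then gg j k else 0)]
      have hmaps : ∀ p ∈ (range (H + 1)) ×ˢ (range (H + 1)),
          p.1 + p.2 ∈ range (2 * H + 1) := by
        intro p hp
        rw [Finset.mem_product] at hp
        obtain ⟨h1, h2⟩ := hp
        rw [Finset.mem_range] at h1 h2 ⊢
        omega
      rw [← Finset.sum_fiberwise_of_maps_to hmaps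
        (fun p : ℕ × ℕ => if p.1 + p.2 ≤ r then gg p.1 p.2 else 0)]
      have hinner : ∀ s ∈ range (2 * H + 1),
          ∑ p ∈ ((range (H + 1)) ×ˢ (range (H + 1))).filter (fun p => p.1 + p.2 = s),
            (if p.1 + p.2 ≤ r then gg p.1 p.2 else 0)
          ≤ (if 1 ≤ s ∧ s ≤ r then (2:ℝ) else 0) := by
        intro s _
        have hconst : ∀ p ∈ ((range (H + 1)) ×ˢ (range (H + 1))).filter
            (fun p => p.1 + p.2 = s),
            (if p.1 + p.2 ≤ r then gg p.1 p.2 else 0)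
              = (if 1 ≤ s ∧ s ≤ r then ((s:ℕ):ℝ)⁻¹ else 0) := by
          intro p hp
          obtain ⟨hmem, hps⟩ := Finset.mem_filter.mp hp
          simp only [gg]
          rw [hps]
          by_cases h0 : s = 0
          · subst h0
            simp [gp]
          · by_cases hsr : s ≤ r
            · rw [if_pos hsr, if_pos ⟨by omega, hsr⟩, gp, if_neg h0]
            · rw [if_neg hsr, if_neg (by tauto)]
        rw [Finset.sum_congr rfl hconst, Finset.sum_const, nsmul_eq_mul]
        by_cases hc : 1 ≤ s ∧ s ≤ r
        · rw [if_pos hc, if_pos hc]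
          have hcard : (((range (H + 1)) ×ˢ (range (H + 1))).filter
              (fun p => p.1 + p.2 = s)).card ≤ s + 1 := by
            have hinj : (((range (H + 1)) ×ˢ (range (H + 1))).filter
                (fun p => p.1 + p.2 = s)).card ≤ (range (s + 1)).card := by
              apply Finset.card_le_card_of_injOn (fun p : ℕ × ℕ => p.1)
              · intro p hp
                obtain ⟨-, hps⟩ := Finset.mem_filter.mp hp
                exact Finset.mem_range.mpr (by show p.1 < s + 1; omega)
              · intro p hp q hq hpq
                simp only [Finset.coe_filter, Set.mem_setOf_eq] at hp hq
                obtain ⟨-, hps⟩ := hp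
                obtain ⟨-, hqs⟩ := hq
                have hpq' : p.1 = q.1 := hpq
                have h2 : p.2 = q.2 := by omega
                exact Prod.ext hpq' h2
            simpa using hinj

          have hspos : (0:ℝ) < (s:ℝ) := by exact_mod_cast (by omega : 0 < s)
          calc ((((range (H + 1)) ×ˢ (range (H + 1))).filter
                (fun p => p.1 + p.2 = s)).card : ℝ) * ((s:ℕ):ℝ)⁻¹
              ≤ ((s + 1 : ℕ) : ℝ) * ((s:ℕ):ℝ)⁻¹ := by
                apply mul_le_mul_of_nonneg_right _ (by positivity)
                exact_mod_cast hcard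
            _ ≤ 2 := by
                rw [inv_eq_one_div, mul_one_div, div_le_iff₀ hspos]
                push_cast
                have : 1 ≤ s := hc.1
                have hsc : (1:ℝ) ≤ (s:ℝ) := by exact_mod_cast this
                linarith
        · rw [if_neg hc, if_neg hc, mul_zero]
      calc ∑ s ∈ range (2 * H + 1),
            ∑ p ∈ ((range (H + 1)) ×ˢ (range (H + 1))).filter (fun p => p.1 + p.2 = s),
              (if p.1 + p.2 ≤ r then gg p.1 p.2 else 0)
          ≤ ∑ s ∈ range (2 * H + 1), (if 1 ≤ s ∧ s ≤ r then (2:ℝ) else 0) :=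
            Finset.sum_le_sum hinner
        _ = ∑ s ∈ (range (2 * H + 1)).filter (fun s => 1 ≤ s ∧ s ≤ r), (2:ℝ) := by
            rw [Finset.sum_filter]
        _ = ((range (2 * H + 1)).filter (fun s => 1 ≤ s ∧ s ≤ r)).card • (2:ℝ) := by
            rw [Finset.sum_const]
        _ ≤ 2 * (r:ℝ) := by
            rw [nsmul_eq_mul]
            have hsubs : (range (2 * H + 1)).filter (fun s => 1 ≤ s ∧ s ≤ r)
                ⊆ Finset.Icc 1 r := by
              intro s hs
              obtain ⟨-, hs2⟩ := Finset.mem_filter.mp hs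
              exact Finset.mem_Icc.mpr ⟨hs2.1, hs2.2⟩
            have hcard2 : ((range (2 * H + 1)).filter (fun s => 1 ≤ s ∧ s ≤ r)).card ≤ r := by
              refine (Finset.card_le_card hsubs).trans ?_
              rw [Nat.card_Icc]
              omega
            have : (((range (2 * H + 1)).filter (fun s => 1 ≤ s ∧ s ≤ r)).card : ℝ) ≤ (r:ℝ) := by
              exact_mod_cast hcard2
            linarith
    -- put the near part together
    have hfinal : (ccr / N) * ∑ j ∈ range (H + 1), ∑ k ∈ range (H + 1),
          (fib N j : ℝ) * (fib N k : ℝ) * (if j + k ≤ r then gg j k else 0)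
        ≤ 8 * (N:ℝ) ^ (-(1:ℝ)/3) := by
      have hcn : (0:ℝ) ≤ ccr / N := div_nonneg ccr_pos.le hX0.le
      have hchain : ∑ j ∈ range (H + 1), ∑ k ∈ range (H + 1),
            (fib N j : ℝ) * (fib N k : ℝ) * (if j + k ≤ r then gg j k else 0)
          ≤ 4 * (2 * (r:ℝ)) :=
        hfib4.trans (mul_le_mul_of_nonneg_left htri (by norm_num))
      calc (ccr / N) * ∑ j ∈ range (H + 1), ∑ k ∈ range (H + 1),
            (fib N j : ℝ) * (fib N k : ℝ) * (if j + k ≤ r then gg j k else 0)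
          ≤ (ccr / N) * (4 * (2 * (r:ℝ))) := mul_le_mul_of_nonneg_left hchain hcn
        _ = (8 * ccr) * ((r:ℝ) / (N:ℝ)) := by ring
        _ ≤ 4 * ((2 * (N:ℝ) ^ ((2:ℝ)/3)) / (N:ℝ)) := by
            apply mul_le_mul (by linarith [ccr_le_half]) _
              (div_nonneg (Nat.cast_nonneg r) hX0.le) (by norm_num)
            exact (div_le_div_iff_of_pos_right hX0).mpr hrup
        _ = 8 * ((N:ℝ) ^ ((2:ℝ)/3) / (N:ℝ)) := by ring
        _ = 8 * (N:ℝ) ^ (-(1:ℝ)/3) := by rw [hm]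
    calc ∑ u ∈ A, (if torusDist N u v ≤ r then Ffun N (torusDist N u v) else 0)
        ≤ ∑ u : Vtx N, (if torusDist N u v ≤ r then Ffun N (torusDist N u v) else 0) := hstep1
      _ = (ccr / N) * ∑ j ∈ range (H + 1), ∑ k ∈ range (H + 1),
            (fib N j : ℝ) * (fib N k : ℝ) * (if j + k ≤ r then gg j k else 0) := by
          rw [hstep2, hstep3]
      _ ≤ 8 * (N:ℝ) ^ (-(1:ℝ)/3) := hfinal
  have hXnn : (0:ℝ) ≤ (N:ℝ) ^ (-(1:ℝ)/3) := by positivity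
  have hhalfK : (K/2) * (N:ℝ) ^ (-(1:ℝ)/3) ≤ K * (N:ℝ) ^ (-(1:ℝ)/3) :=
    mul_le_mul_of_nonneg_right (by linarith) hXnn
  rw [hsplitsum]
  have := hfar.trans hfar2
  linarith


/-- At criticality, for every `K > 0` there are `C' > 0` and `N₀` such that for every
`N ≥ N₀`, every `A ⊆ V_N` with `|A| ≤ K·N^{4/3}` and every `v ∉ A`,
`|Z_{N,A}(v) − 1| ≤ C'·N^{−1/3}`. -/
theorem stmt14 (K : ℝ) (hK : 0 < K) :
    ∃ C' : ℝ, 0 < C' ∧ ∃ N₀ : ℕ, ∀ (N : ℕ) [NeZero N], N₀ ≤ N →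
      ∀ A : Finset (Vtx N), (A.card : ℝ) ≤ K * (N : ℝ) ^ ((4 : ℝ) / 3) →
        ∀ v : Vtx N, v ∉ A →
          |ZNA N ccr A v - 1| ≤ C' * (N : ℝ) ^ (-(1 : ℝ) / 3) := by
  classical
  refine ⟨100 + K, by linarith, 2, ?_⟩
  intro N _ hN2 A hA v hv
  have hedge : ∀ u : Vtx N, edgeProb N ccr u v = Ffun N (torusDist N u v) :=
    fun u => edgeProb_eq_Ffun N u v
  have hdecomp : ZNA N ccr A v
      = (∑ u ∈ Finset.univ.erase v, edgeProb N ccr u v)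
        - ∑ u ∈ A, Ffun N (torusDist N u v) := by
    have hsub : (Finset.univ \ A).erase v ⊆ Finset.univ.erase v := by
      intro u hu
      simp only [Finset.mem_erase, Finset.mem_sdiff, Finset.mem_univ, true_and] at hu ⊢
      exact ⟨hu.1, trivial⟩
    have hdiff : (Finset.univ.erase v) \ ((Finset.univ \ A).erase v) = A := by
      ext a
      constructor
      · intro h
        rw [Finset.mem_sdiff] at h
        obtain ⟨h1, h2⟩ := h
        by_contra hna
        apply h2
        rw [Finset.mem_erase]
        refine ⟨(Finset.mem_erase.mp h1).1, ?_⟩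
        rw [Finset.mem_sdiff]
        exact ⟨Finset.mem_univ a, hna⟩
      · intro ha
        rw [Finset.mem_sdiff, Finset.mem_erase, Finset.mem_erase, Finset.mem_sdiff]
        have hav : a ≠ v := fun h => hv (h ▸ ha)
        exact ⟨⟨hav, Finset.mem_univ a⟩, fun hcon => hcon.2.2 ha⟩
    have hkey := Finset.sum_sdiff (f := fun u => Ffun N (torusDist N u v)) hsub
    rw [hdiff] at hkey
    have e1 : ∑ u ∈ Finset.univ.erase v, edgeProb N ccr u v
        = ∑ u ∈ Finset.univ.erase v, Ffun N (torusDist N u v) :=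
      Finset.sum_congr rfl fun u _ => hedge u
    have e2 : ZNA N ccr A v = ∑ u ∈ (Finset.univ \ A).erase v, Ffun N (torusDist N u v) := by
      rw [ZNA]
      exact Finset.sum_congr rfl fun u _ => hedge u
    rw [e1, e2]
    linarith
  have h1 := full_sum_bound N hN2 v
  have h2 := removal_bound K hK N hN2 A hA v
  have h0 : 0 ≤ ∑ u ∈ A, Ffun N (torusDist N u v) :=
    Finset.sum_nonneg fun u _ => Ffun_nonneg N _
  have hXnn : (0:ℝ) ≤ (N:ℝ) ^ (-(1:ℝ)/3) := by positivity
  obtain ⟨h1a, h1b⟩ := abs_le.mp h1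
  rw [hdecomp, abs_le]
  have hKX : 0 ≤ K * (N:ℝ) ^ (-(1:ℝ)/3) := mul_nonneg hK.le hXnn
  constructor
  · nlinarith
  · nlinarith
end
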